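/- Fix real parameters a4, a5, a6, a7. If x ∈ ℝ^8 is a singular configuration of the subsystem 4567 (i.e. Q(x) = 0 and the 6×8 Jacobian matrix of Q at x has rank strictly less than 6), then the product t1·t2·t3·t4·t5·t6·t7·t8 = 0, where t1 = a4-a5-a6-a7, t2 = a4-a5+a6+a7, t3 = a4+a5+a6+a7, t4 = a4+a5-a6-a7, t5 = a4-a5+a6-a7, t6 = a4-a5-a6+a7, t7 = a4+a5-a6+a7, t8 = a4+a5+a6-a7. -/

import Mathlib

/-- The Jacobian matrix of a map `f : ℝ^n → ℝ^m` at a point `x`,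
whose `(i, j)` entry is the partial derivative of the `i`-th component of `f`
with respect to the `j`-th variable. -/
noncomputable def jacobian {n m : ℕ} (f : (Fin n → ℝ) → Fin m → ℝ) (x : Fin n → ℝ) :
    Matrix (Fin m) (Fin n) ℝ :=
  Matrix.of fun i j => fderiv ℝ (fun y => f y i) x (Pi.single j 1)

/-- The constraint map `Q : ℝ^8 → ℝ^6` of the subsystem 4567, in the variables
`(c4, s4, c5, s5, c6, s6, c7, s7)`. -/
noncomputable def Q4567 (a4 a5 a6 a7 : ℝ) (x : Fin 8 → ℝ) : Fin 6 → ℝ :=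
  ![a4 * (x 1 * x 2 + x 0 * x 3) + a5 * x 2 - a6 * (x 4 * x 6 - x 5 * x 7) - a7 * x 7,
    a4 * (x 0 * x 2 - x 1 * x 3) - a5 * x 3 + a6 * (x 5 * x 6 + x 4 * x 7) - a7 * x 6,
    x 0 ^ 2 + x 1 ^ 2 - 1,
    x 2 ^ 2 + x 3 ^ 2 - 1,
    x 4 ^ 2 + x 5 ^ 2 - 1,
    x 6 ^ 2 + x 7 ^ 2 - 1]

private lemma vec8_0 {α : Type*} (a0 a1 a2 a3 a4 a5 a6 a7 : α) : ![a0,a1,a2,a3,a4,a5,a6,a7] (0 : Fin 8) = a0 := rfl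
private lemma vec8_1 {α : Type*} (a0 a1 a2 a3 a4 a5 a6 a7 : α) : ![a0,a1,a2,a3,a4,a5,a6,a7] (1 : Fin 8) = a1 := rfl
private lemma vec8_2 {α : Type*} (a0 a1 a2 a3 a4 a5 a6 a7 : α) : ![a0,a1,a2,a3,a4,a5,a6,a7] (2 : Fin 8) = a2 := rfl
private lemma vec8_3 {α : Type*} (a0 a1 a2 a3 a4 a5 a6 a7 : α) : ![a0,a1,a2,a3,a4,a5,a6,a7] (3 : Fin 8) = a3 := rfl
private lemma vec8_4 {α : Type*} (a0 a1 a2 a3 a4 a5 a6 a7 : α) : ![a0,a1,a2,a3,a4,a5,a6,a7] (4 : Fin 8) = a4 := rfl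
private lemma vec8_5 {α : Type*} (a0 a1 a2 a3 a4 a5 a6 a7 : α) : ![a0,a1,a2,a3,a4,a5,a6,a7] (5 : Fin 8) = a5 := rfl
private lemma vec8_6 {α : Type*} (a0 a1 a2 a3 a4 a5 a6 a7 : α) : ![a0,a1,a2,a3,a4,a5,a6,a7] (6 : Fin 8) = a6 := rfl
private lemma vec8_7 {α : Type*} (a0 a1 a2 a3 a4 a5 a6 a7 : α) : ![a0,a1,a2,a3,a4,a5,a6,a7] (7 : Fin 8) = a7 := rfl
private lemma vec6_0 {α : Type*} (a0 a1 a2 a3 a4 a5 : α) : ![a0,a1,a2,a3,a4,a5] (0 : Fin 6) = a0 := rfl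
private lemma vec6_1 {α : Type*} (a0 a1 a2 a3 a4 a5 : α) : ![a0,a1,a2,a3,a4,a5] (1 : Fin 6) = a1 := rfl
private lemma vec6_2 {α : Type*} (a0 a1 a2 a3 a4 a5 : α) : ![a0,a1,a2,a3,a4,a5] (2 : Fin 6) = a2 := rfl
private lemma vec6_3 {α : Type*} (a0 a1 a2 a3 a4 a5 : α) : ![a0,a1,a2,a3,a4,a5] (3 : Fin 6) = a3 := rfl
private lemma vec6_4 {α : Type*} (a0 a1 a2 a3 a4 a5 : α) : ![a0,a1,a2,a3,a4,a5] (4 : Fin 6) = a4 := rfl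
private lemma vec6_5 {α : Type*} (a0 a1 a2 a3 a4 a5 : α) : ![a0,a1,a2,a3,a4,a5] (5 : Fin 6) = a5 := rfl
private lemma single8_0 : Pi.single (0:Fin 8) (1:ℝ) = ![1,0,0,0,0,0,0,0] := by
  funext k; fin_cases k <;> simp [Pi.single_apply] <;> norm_num [Fin.ext_iff] <;> rfl
private lemma single8_1 : Pi.single (1:Fin 8) (1:ℝ) = ![0,1,0,0,0,0,0,0] := by
  funext k; fin_cases k <;> simp [Pi.single_apply] <;> norm_num [Fin.ext_iff] <;> rfl
private lemma single8_2 : Pi.single (2:Fin 8) (1:ℝ) = ![0,0,1,0,0,0,0,0] := by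
  funext k; fin_cases k <;> simp [Pi.single_apply] <;> norm_num [Fin.ext_iff] <;> rfl
private lemma single8_3 : Pi.single (3:Fin 8) (1:ℝ) = ![0,0,0,1,0,0,0,0] := by
  funext k; fin_cases k <;> simp [Pi.single_apply] <;> norm_num [Fin.ext_iff] <;> rfl
private lemma single8_4 : Pi.single (4:Fin 8) (1:ℝ) = ![0,0,0,0,1,0,0,0] := by
  funext k; fin_cases k <;> simp [Pi.single_apply] <;> norm_num [Fin.ext_iff] <;> rfl
private lemma single8_5 : Pi.single (5:Fin 8) (1:ℝ) = ![0,0,0,0,0,1,0,0] := by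
  funext k; fin_cases k <;> simp [Pi.single_apply] <;> norm_num [Fin.ext_iff] <;> rfl
private lemma single8_6 : Pi.single (6:Fin 8) (1:ℝ) = ![0,0,0,0,0,0,1,0] := by
  funext k; fin_cases k <;> simp [Pi.single_apply] <;> norm_num [Fin.ext_iff] <;> rfl
private lemma single8_7 : Pi.single (7:Fin 8) (1:ℝ) = ![0,0,0,0,0,0,0,1] := by
  funext k; fin_cases k <;> simp [Pi.single_apply] <;> norm_num [Fin.ext_iff] <;> rfl

private lemma jrow0 (a4 a5 a6 a7 : ℝ) (x : Fin 8 → ℝ) (j : Fin 8) :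
    jacobian (Q4567 a4 a5 a6 a7) x 0 j = (a4 * x 3) * (Pi.single j 1 : Fin 8 → ℝ) 0 + (a4 * x 2) * (Pi.single j 1 : Fin 8 → ℝ) 1 + (a4 * x 1 + a5) * (Pi.single j 1 : Fin 8 → ℝ) 2 + (a4 * x 0) * (Pi.single j 1 : Fin 8 → ℝ) 3 + (-(a6 * x 6)) * (Pi.single j 1 : Fin 8 → ℝ) 4 + (a6 * x 7) * (Pi.single j 1 : Fin 8 → ℝ) 5 + (-(a6 * x 4)) * (Pi.single j 1 : Fin 8 → ℝ) 6 + (a6 * x 5 - a7) * (Pi.single j 1 : Fin 8 → ℝ) 7 := by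
  have p : ∀ k : Fin 8, HasFDerivAt (fun y : Fin 8 → ℝ => y k)
      (ContinuousLinearMap.proj k : (Fin 8 → ℝ) →L[ℝ] ℝ) x :=
    fun k => hasFDerivAt_apply k x
  have h := ((((((p 1).mul (p 2)).add ((p 0).mul (p 3))).const_mul a4).add ((p 2).const_mul a5)).sub ((((p 4).mul (p 6)).sub ((p 5).mul (p 7))).const_mul a6)).sub ((p 7).const_mul a7)
  have e : (fun y : Fin 8 → ℝ => Q4567 a4 a5 a6 a7 y 0) =
      fun y : Fin 8 → ℝ => a4 * (y 1 * y 2 + y 0 * y 3) + a5 * y 2 - a6 * (y 4 * y 6 - y 5 * y 7) - a7 * y 7 := by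
    funext y; simp only [Q4567, vec8_0, vec8_1, vec8_2, vec8_3, vec8_4, vec8_5, vec8_6, vec8_7, vec6_0, vec6_1, vec6_2, vec6_3, vec6_4, vec6_5]
    try ring
  show fderiv ℝ (fun y => Q4567 a4 a5 a6 a7 y 0) x (Pi.single j 1) = _
  erw [e, h.fderiv]
  simp only [ContinuousLinearMap.sub_apply, ContinuousLinearMap.add_apply,
    ContinuousLinearMap.smul_apply, ContinuousLinearMap.proj_apply, smul_eq_mul,
    ContinuousLinearMap.coe_sub', Pi.sub_apply]
  ring

private lemma jrow1 (a4 a5 a6 a7 : ℝ) (x : Fin 8 → ℝ) (j : Fin 8) :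
    jacobian (Q4567 a4 a5 a6 a7) x 1 j = (a4 * x 2) * (Pi.single j 1 : Fin 8 → ℝ) 0 + (-(a4 * x 3)) * (Pi.single j 1 : Fin 8 → ℝ) 1 + (a4 * x 0) * (Pi.single j 1 : Fin 8 → ℝ) 2 + (-(a4 * x 1) - a5) * (Pi.single j 1 : Fin 8 → ℝ) 3 + (a6 * x 7) * (Pi.single j 1 : Fin 8 → ℝ) 4 + (a6 * x 6) * (Pi.single j 1 : Fin 8 → ℝ) 5 + (a6 * x 5 - a7) * (Pi.single j 1 : Fin 8 → ℝ) 6 + (a6 * x 4) * (Pi.single j 1 : Fin 8 → ℝ) 7 := by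
  have p : ∀ k : Fin 8, HasFDerivAt (fun y : Fin 8 → ℝ => y k)
      (ContinuousLinearMap.proj k : (Fin 8 → ℝ) →L[ℝ] ℝ) x :=
    fun k => hasFDerivAt_apply k x
  have h := ((((((p 0).mul (p 2)).sub ((p 1).mul (p 3))).const_mul a4).sub ((p 3).const_mul a5)).add ((((p 5).mul (p 6)).add ((p 4).mul (p 7))).const_mul a6)).sub ((p 6).const_mul a7)
  have e : (fun y : Fin 8 → ℝ => Q4567 a4 a5 a6 a7 y 1) =
      fun y : Fin 8 → ℝ => a4 * (y 0 * y 2 - y 1 * y 3) - a5 * y 3 + a6 * (y 5 * y 6 + y 4 * y 7) - a7 * y 6 := by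
    funext y; simp only [Q4567, vec8_0, vec8_1, vec8_2, vec8_3, vec8_4, vec8_5, vec8_6, vec8_7, vec6_0, vec6_1, vec6_2, vec6_3, vec6_4, vec6_5]
    try ring
  show fderiv ℝ (fun y => Q4567 a4 a5 a6 a7 y 1) x (Pi.single j 1) = _
  erw [e, h.fderiv]
  simp only [ContinuousLinearMap.sub_apply, ContinuousLinearMap.add_apply,
    ContinuousLinearMap.smul_apply, ContinuousLinearMap.proj_apply, smul_eq_mul,
    ContinuousLinearMap.coe_sub', Pi.sub_apply]
  ring

private lemma jrow2 (a4 a5 a6 a7 : ℝ) (x : Fin 8 → ℝ) (j : Fin 8) :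
    jacobian (Q4567 a4 a5 a6 a7) x 2 j = (2 * x 0) * (Pi.single j 1 : Fin 8 → ℝ) 0 + (2 * x 1) * (Pi.single j 1 : Fin 8 → ℝ) 1 := by
  have p : ∀ k : Fin 8, HasFDerivAt (fun y : Fin 8 → ℝ => y k)
      (ContinuousLinearMap.proj k : (Fin 8 → ℝ) →L[ℝ] ℝ) x :=
    fun k => hasFDerivAt_apply k x
  have h := (((p 0).mul (p 0)).add ((p 1).mul (p 1))).sub_const 1
  have e : (fun y : Fin 8 → ℝ => Q4567 a4 a5 a6 a7 y 2) =
      fun y : Fin 8 → ℝ => y 0 * y 0 + y 1 * y 1 - 1 := by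
    funext y; simp only [Q4567, vec8_0, vec8_1, vec8_2, vec8_3, vec8_4, vec8_5, vec8_6, vec8_7, vec6_0, vec6_1, vec6_2, vec6_3, vec6_4, vec6_5]
    try ring
  show fderiv ℝ (fun y => Q4567 a4 a5 a6 a7 y 2) x (Pi.single j 1) = _
  erw [e, h.fderiv]
  simp only [ContinuousLinearMap.sub_apply, ContinuousLinearMap.add_apply,
    ContinuousLinearMap.smul_apply, ContinuousLinearMap.proj_apply, smul_eq_mul,
    ContinuousLinearMap.coe_sub', Pi.sub_apply]
  ring

private lemma jrow3 (a4 a5 a6 a7 : ℝ) (x : Fin 8 → ℝ) (j : Fin 8) :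
    jacobian (Q4567 a4 a5 a6 a7) x 3 j = (2 * x 2) * (Pi.single j 1 : Fin 8 → ℝ) 2 + (2 * x 3) * (Pi.single j 1 : Fin 8 → ℝ) 3 := by
  have p : ∀ k : Fin 8, HasFDerivAt (fun y : Fin 8 → ℝ => y k)
      (ContinuousLinearMap.proj k : (Fin 8 → ℝ) →L[ℝ] ℝ) x :=
    fun k => hasFDerivAt_apply k x
  have h := (((p 2).mul (p 2)).add ((p 3).mul (p 3))).sub_const 1
  have e : (fun y : Fin 8 → ℝ => Q4567 a4 a5 a6 a7 y 3) =
      fun y : Fin 8 → ℝ => y 2 * y 2 + y 3 * y 3 - 1 := by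
    funext y; simp only [Q4567, vec8_0, vec8_1, vec8_2, vec8_3, vec8_4, vec8_5, vec8_6, vec8_7, vec6_0, vec6_1, vec6_2, vec6_3, vec6_4, vec6_5]
    try ring
  show fderiv ℝ (fun y => Q4567 a4 a5 a6 a7 y 3) x (Pi.single j 1) = _
  erw [e, h.fderiv]
  simp only [ContinuousLinearMap.sub_apply, ContinuousLinearMap.add_apply,
    ContinuousLinearMap.smul_apply, ContinuousLinearMap.proj_apply, smul_eq_mul,
    ContinuousLinearMap.coe_sub', Pi.sub_apply]
  ring

private lemma jrow4 (a4 a5 a6 a7 : ℝ) (x : Fin 8 → ℝ) (j : Fin 8) :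
    jacobian (Q4567 a4 a5 a6 a7) x 4 j = (2 * x 4) * (Pi.single j 1 : Fin 8 → ℝ) 4 + (2 * x 5) * (Pi.single j 1 : Fin 8 → ℝ) 5 := by
  have p : ∀ k : Fin 8, HasFDerivAt (fun y : Fin 8 → ℝ => y k)
      (ContinuousLinearMap.proj k : (Fin 8 → ℝ) →L[ℝ] ℝ) x :=
    fun k => hasFDerivAt_apply k x
  have h := (((p 4).mul (p 4)).add ((p 5).mul (p 5))).sub_const 1
  have e : (fun y : Fin 8 → ℝ => Q4567 a4 a5 a6 a7 y 4) =
      fun y : Fin 8 → ℝ => y 4 * y 4 + y 5 * y 5 - 1 := by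
    funext y; simp only [Q4567, vec8_0, vec8_1, vec8_2, vec8_3, vec8_4, vec8_5, vec8_6, vec8_7, vec6_0, vec6_1, vec6_2, vec6_3, vec6_4, vec6_5]
    try ring
  show fderiv ℝ (fun y => Q4567 a4 a5 a6 a7 y 4) x (Pi.single j 1) = _
  erw [e, h.fderiv]
  simp only [ContinuousLinearMap.sub_apply, ContinuousLinearMap.add_apply,
    ContinuousLinearMap.smul_apply, ContinuousLinearMap.proj_apply, smul_eq_mul,
    ContinuousLinearMap.coe_sub', Pi.sub_apply]
  ring

private lemma jrow5 (a4 a5 a6 a7 : ℝ) (x : Fin 8 → ℝ) (j : Fin 8) :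
    jacobian (Q4567 a4 a5 a6 a7) x 5 j = (2 * x 6) * (Pi.single j 1 : Fin 8 → ℝ) 6 + (2 * x 7) * (Pi.single j 1 : Fin 8 → ℝ) 7 := by
  have p : ∀ k : Fin 8, HasFDerivAt (fun y : Fin 8 → ℝ => y k)
      (ContinuousLinearMap.proj k : (Fin 8 → ℝ) →L[ℝ] ℝ) x :=
    fun k => hasFDerivAt_apply k x
  have h := (((p 6).mul (p 6)).add ((p 7).mul (p 7))).sub_const 1
  have e : (fun y : Fin 8 → ℝ => Q4567 a4 a5 a6 a7 y 5) =
      fun y : Fin 8 → ℝ => y 6 * y 6 + y 7 * y 7 - 1 := by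
    funext y; simp only [Q4567, vec8_0, vec8_1, vec8_2, vec8_3, vec8_4, vec8_5, vec8_6, vec8_7, vec6_0, vec6_1, vec6_2, vec6_3, vec6_4, vec6_5]
    try ring
  show fderiv ℝ (fun y => Q4567 a4 a5 a6 a7 y 5) x (Pi.single j 1) = _
  erw [e, h.fderiv]
  simp only [ContinuousLinearMap.sub_apply, ContinuousLinearMap.add_apply,
    ContinuousLinearMap.smul_apply, ContinuousLinearMap.proj_apply, smul_eq_mul,
    ContinuousLinearMap.coe_sub', Pi.sub_apply]
  ring

private lemma left_kernel {m n : ℕ} (M : Matrix (Fin m) (Fin n) ℝ) (h : M.rank < m) :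
    ∃ μ : Fin m → ℝ, μ ≠ 0 ∧ Matrix.vecMul μ M = 0 := by
  by_contra hc
  push_neg at hc
  have hinj : Function.Injective M.transpose.mulVecLin := by
    rw [← LinearMap.ker_eq_bot]
    ext μ
    simp only [LinearMap.mem_ker, Submodule.mem_bot, Matrix.mulVecLin_apply]
    constructor
    · intro h0
      by_contra hne
      exact (hc μ hne) (by rwa [← Matrix.mulVec_transpose])
    · rintro rfl; simp
  have : M.transpose.rank = m := by
    rw [Matrix.rank, LinearMap.finrank_range_of_inj hinj]
    simp
  rw [Matrix.rank_transpose] at this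
  omega

private lemma sqrot (a m0 m1 p q : ℝ) (hpq : p^2 + q^2 = 1) (h0 : a*(m0*p - m1*q) = 0) :
    (a*(m0*q + m1*p))^2 = a^2*(m0^2 + m1^2) := by
  linear_combination (a^2*(m0^2+m1^2))*hpq - (a*(m0*p-m1*q))*h0

private lemma pm_of_sq (e a : ℝ) (h : e^2 = a^2) : e = a ∨ e = -a := by
  have h' : (e - a) * (e + a) = 0 := by linear_combination h
  rcases mul_eq_zero.mp h' with h''|h''
  · left; linarith
  · right; linarith

private lemma prod8 (a4 a5 a6 a7 f4 f5 f6 f7 : ℝ)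
    (h4 : f4 = a4 ∨ f4 = -a4) (h5 : f5 = a5 ∨ f5 = -a5)
    (h6 : f6 = a6 ∨ f6 = -a6) (h7 : f7 = a7 ∨ f7 = -a7)
    (hsum : f4 + f5 - f6 - f7 = 0) :
    (a4 - a5 - a6 - a7) * (a4 - a5 + a6 + a7) * (a4 + a5 + a6 + a7) * (a4 + a5 - a6 - a7) *
      (a4 - a5 + a6 - a7) * (a4 - a5 - a6 + a7) * (a4 + a5 - a6 + a7) * (a4 + a5 + a6 - a7)
      = 0 := by
  rcases h4 with h4|h4 <;> rcases h5 with h5|h5 <;>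
    rcases h6 with h6|h6 <;> rcases h7 with h7|h7 <;>
    rw [h4, h5, h6, h7] at hsum <;>
    first
    | (rw [show a4 - a5 - a6 - a7 = 0 from by linarith]; ring)
    | (rw [show a4 - a5 + a6 + a7 = 0 from by linarith]; ring)
    | (rw [show a4 + a5 + a6 + a7 = 0 from by linarith]; ring)
    | (rw [show a4 + a5 - a6 - a7 = 0 from by linarith]; ring)
    | (rw [show a4 - a5 + a6 - a7 = 0 from by linarith]; ring)
    | (rw [show a4 - a5 - a6 + a7 = 0 from by linarith]; ring)
    | (rw [show a4 + a5 - a6 + a7 = 0 from by linarith]; ring)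
    | (rw [show a4 + a5 + a6 - a7 = 0 from by linarith]; ring)


set_option maxHeartbeats 1000000 in
/-- If `x` is a singular configuration of the subsystem 4567, then the product
`t1*t2*t3*t4*t5*t6*t7*t8` of the eight linear forms vanishes. -/
theorem singular4567_product_eq_zero (a4 a5 a6 a7 : ℝ) (x : Fin 8 → ℝ)
    (hQ : Q4567 a4 a5 a6 a7 x = 0)
    (hrank : (jacobian (Q4567 a4 a5 a6 a7) x).rank < 6) :
    (a4 - a5 - a6 - a7) * (a4 - a5 + a6 + a7) * (a4 + a5 + a6 + a7) * (a4 + a5 - a6 - a7) *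
      (a4 - a5 + a6 - a7) * (a4 - a5 - a6 + a7) * (a4 + a5 - a6 + a7) * (a4 + a5 + a6 - a7)
      = 0 := by
  have hq0 := congrFun hQ 0
  have hq1 := congrFun hQ 1
  have hq2 := congrFun hQ 2
  have hq3 := congrFun hQ 3
  have hq4 := congrFun hQ 4
  have hq5 := congrFun hQ 5
  simp only [Q4567, vec6_0, vec6_1, vec6_2, vec6_3, vec6_4, vec6_5, Pi.zero_apply]
    at hq0 hq1 hq2 hq3 hq4 hq5
  obtain ⟨μ, hμne, hker⟩ := left_kernel _ hrank
  have c0 := congrFun hker 0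
  simp only [Matrix.vecMul, dotProduct, Fin.sum_univ_six, Pi.zero_apply] at c0
  rw [jrow0, jrow1, jrow2, jrow3, jrow4, jrow5] at c0
  simp only [single8_0, vec8_0, vec8_1, vec8_2, vec8_3, vec8_4, vec8_5, vec8_6, vec8_7,
    mul_zero, mul_one, zero_mul, add_zero, zero_add] at c0
  have c1 := congrFun hker 1
  simp only [Matrix.vecMul, dotProduct, Fin.sum_univ_six, Pi.zero_apply] at c1
  rw [jrow0, jrow1, jrow2, jrow3, jrow4, jrow5] at c1
  simp only [single8_1, vec8_0, vec8_1, vec8_2, vec8_3, vec8_4, vec8_5, vec8_6, vec8_7,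
    mul_zero, mul_one, zero_mul, add_zero, zero_add] at c1
  have c2 := congrFun hker 2
  simp only [Matrix.vecMul, dotProduct, Fin.sum_univ_six, Pi.zero_apply] at c2
  rw [jrow0, jrow1, jrow2, jrow3, jrow4, jrow5] at c2
  simp only [single8_2, vec8_0, vec8_1, vec8_2, vec8_3, vec8_4, vec8_5, vec8_6, vec8_7,
    mul_zero, mul_one, zero_mul, add_zero, zero_add] at c2
  have c3 := congrFun hker 3
  simp only [Matrix.vecMul, dotProduct, Fin.sum_univ_six, Pi.zero_apply] at c3
  rw [jrow0, jrow1, jrow2, jrow3, jrow4, jrow5] at c3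
  simp only [single8_3, vec8_0, vec8_1, vec8_2, vec8_3, vec8_4, vec8_5, vec8_6, vec8_7,
    mul_zero, mul_one, zero_mul, add_zero, zero_add] at c3
  have c4 := congrFun hker 4
  simp only [Matrix.vecMul, dotProduct, Fin.sum_univ_six, Pi.zero_apply] at c4
  rw [jrow0, jrow1, jrow2, jrow3, jrow4, jrow5] at c4
  simp only [single8_4, vec8_0, vec8_1, vec8_2, vec8_3, vec8_4, vec8_5, vec8_6, vec8_7,
    mul_zero, mul_one, zero_mul, add_zero, zero_add] at c4
  have c5 := congrFun hker 5
  simp only [Matrix.vecMul, dotProduct, Fin.sum_univ_six, Pi.zero_apply] at c5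
  rw [jrow0, jrow1, jrow2, jrow3, jrow4, jrow5] at c5
  simp only [single8_5, vec8_0, vec8_1, vec8_2, vec8_3, vec8_4, vec8_5, vec8_6, vec8_7,
    mul_zero, mul_one, zero_mul, add_zero, zero_add] at c5
  have c6 := congrFun hker 6
  simp only [Matrix.vecMul, dotProduct, Fin.sum_univ_six, Pi.zero_apply] at c6
  rw [jrow0, jrow1, jrow2, jrow3, jrow4, jrow5] at c6
  simp only [single8_6, vec8_0, vec8_1, vec8_2, vec8_3, vec8_4, vec8_5, vec8_6, vec8_7,
    mul_zero, mul_one, zero_mul, add_zero, zero_add] at c6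
  have c7 := congrFun hker 7
  simp only [Matrix.vecMul, dotProduct, Fin.sum_univ_six, Pi.zero_apply] at c7
  rw [jrow0, jrow1, jrow2, jrow3, jrow4, jrow5] at c7
  simp only [single8_7, vec8_0, vec8_1, vec8_2, vec8_3, vec8_4, vec8_5, vec8_6, vec8_7,
    mul_zero, mul_one, zero_mul, add_zero, zero_add] at c7
  have h01 : μ 0 ≠ 0 ∨ μ 1 ≠ 0 := by
    by_contra hcon
    push_neg at hcon
    obtain ⟨hz0, hz1⟩ := hcon
    rw [hz0, hz1] at c0 c1 c2 c3 c4 c5 c6 c7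
    have h2 : μ 2 = 0 := by linear_combination (x 0/2)*c0 + (x 1/2)*c1 - (μ 2)*hq2
    have h3 : μ 3 = 0 := by linear_combination (x 2/2)*c2 + (x 3/2)*c3 - (μ 3)*hq3
    have h4 : μ 4 = 0 := by linear_combination (x 4/2)*c4 + (x 5/2)*c5 - (μ 4)*hq4
    have h5 : μ 5 = 0 := by linear_combination (x 6/2)*c6 + (x 7/2)*c7 - (μ 5)*hq5
    exact hμne (funext fun i => by fin_cases i <;> simp only [Pi.zero_apply] <;> assumption)
  have hA : a4 * (μ 1 * (x 1*x 2 + x 0*x 3) - μ 0 * (x 0*x 2 - x 1*x 3)) = 0 := by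
    linear_combination (x 1)*c0 - (x 0)*c1
  have hs5 : a5 * (μ 0 * x 3 + μ 1 * x 2) = 0 := by
    linear_combination (x 3)*c2 - (x 2)*c3 - hA
  have hC : a6 * (μ 0 * (x 5*x 6 + x 4*x 7) + μ 1 * (x 4*x 6 - x 5*x 7)) = 0 := by
    linear_combination -(x 5)*c4 + (x 4)*c5
  have hc7 : a7 * (μ 0 * x 6 - μ 1 * x 7) = 0 := by
    linear_combination (x 7)*c6 - (x 6)*c7 + hC
  have hM : a4*(μ 0*(x 1*x 2 + x 0*x 3) + μ 1*(x 0*x 2 - x 1*x 3))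
      + a5*(μ 0*x 2 - μ 1*x 3)
      - a6*(μ 0*(x 4*x 6 - x 5*x 7) - μ 1*(x 5*x 6 + x 4*x 7))
      - a7*(μ 0*x 7 + μ 1*x 6) = 0 := by
    linear_combination (μ 0)*hq0 + (μ 1)*hq1
  have hu1 : (x 0*x 2 - x 1*x 3)^2 + (x 1*x 2 + x 0*x 3)^2 = 1 := by
    linear_combination (x 2^2 + x 3^2)*hq2 + hq3
  have hw1 : (-(x 5*x 6 + x 4*x 7))^2 + (x 4*x 6 - x 5*x 7)^2 = 1 := by
    linear_combination (x 6^2 + x 7^2)*hq4 + hq5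
  have hE4 : (a4*(μ 0*(x 1*x 2 + x 0*x 3) + μ 1*(x 0*x 2 - x 1*x 3)))^2
      = a4^2*(μ 0^2 + μ 1^2) := by
    have := sqrot a4 (μ 0) (μ 1) (x 0*x 2 - x 1*x 3) (x 1*x 2 + x 0*x 3)
      (by linear_combination hu1) (by linear_combination -hA)
    linear_combination this
  have hE5 : (a5*(μ 0*x 2 - μ 1*x 3))^2 = a5^2*(μ 0^2 + μ 1^2) := by
    have := sqrot a5 (μ 0) (μ 1) (-x 3) (x 2)
      (by linear_combination hq3) (by linear_combination -hs5)
    linear_combination this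
  have hE6 : (a6*(μ 0*(x 4*x 6 - x 5*x 7) - μ 1*(x 5*x 6 + x 4*x 7)))^2
      = a6^2*(μ 0^2 + μ 1^2) := by
    have := sqrot a6 (μ 0) (μ 1) (-(x 5*x 6 + x 4*x 7)) (x 4*x 6 - x 5*x 7)
      (by linear_combination hw1) (by linear_combination -hC)
    linear_combination this
  have hE7 : (a7*(μ 0*x 7 + μ 1*x 6))^2 = a7^2*(μ 0^2 + μ 1^2) := by
    have := sqrot a7 (μ 0) (μ 1) (x 6) (x 7)
      (by linear_combination hq5) (by linear_combination hc7)
    linear_combination this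
  have hL : 0 < μ 0^2 + μ 1^2 := by
    rcases h01 with h|h
    · exact add_pos_of_pos_of_nonneg (by positivity) (sq_nonneg _)
    · exact add_pos_of_nonneg_of_pos (sq_nonneg _) (by positivity)
  have hLne : μ 0^2 + μ 1^2 ≠ 0 := hL.ne'
  have hr2 : (Real.sqrt (μ 0^2 + μ 1^2))^2 = μ 0^2 + μ 1^2 := Real.sq_sqrt hL.le
  set r := Real.sqrt (μ 0^2 + μ 1^2)
  have hf4 : (a4*(μ 0*(x 1*x 2 + x 0*x 3) + μ 1*(x 0*x 2 - x 1*x 3))/r)^2 = a4^2 := by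
    rw [div_pow, hE4, hr2]
    exact mul_div_cancel_right₀ _ hLne
  have hf5 : (a5*(μ 0*x 2 - μ 1*x 3)/r)^2 = a5^2 := by
    rw [div_pow, hE5, hr2]
    exact mul_div_cancel_right₀ _ hLne
  have hf6 : (a6*(μ 0*(x 4*x 6 - x 5*x 7) - μ 1*(x 5*x 6 + x 4*x 7))/r)^2 = a6^2 := by
    rw [div_pow, hE6, hr2]
    exact mul_div_cancel_right₀ _ hLne
  have hf7 : (a7*(μ 0*x 7 + μ 1*x 6)/r)^2 = a7^2 := by
    rw [div_pow, hE7, hr2]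
    exact mul_div_cancel_right₀ _ hLne
  have hsum : a4*(μ 0*(x 1*x 2 + x 0*x 3) + μ 1*(x 0*x 2 - x 1*x 3))/r
      + a5*(μ 0*x 2 - μ 1*x 3)/r
      - a6*(μ 0*(x 4*x 6 - x 5*x 7) - μ 1*(x 5*x 6 + x 4*x 7))/r
      - a7*(μ 0*x 7 + μ 1*x 6)/r = 0 := by
    rw [← add_div, div_sub_div_same, div_sub_div_same, hM, zero_div]
  exact prod8 a4 a5 a6 a7 _ _ _ _
    (pm_of_sq _ _ hf4) (pm_of_sq _ _ hf5) (pm_of_sq _ _ hf6) (pm_of_sq _ _ hf7) hsum
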